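/- arXiv:2106.07763 — 2 statements merged into one kernel-verified Lean document; each statement's English description precedes it below -/
import Mathlib

section
/- Representation theorem for translation- and current-invariant relations: let A ⊆ (k×k)×(k×k) be a nonempty relation such that (i) ((φ₁,i₁),(φ₂,i₂)) ∈ A implies i₁ = i₂, (ii) A is invariant under shifting both potentials by any v ∈ k, and (iii) A is an affine subspace of k⁴. Then there exists an affine relation Z ⊆ k × k (an affine subspace of k²) such that A = {((φ₁,i),(φ₂,i)) | (i, φ₂ − φ₁) ∈ Z}. -/
/-- An affine subspace: either empty or a translate of a linear subspace. -/
def IsAffineSubspace (k : Type*) {V : Type*} [Field k] [AddCommGroup V] [Module k V]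
    (A : Set V) : Prop :=
  A = ∅ ∨ ∃ (v : V) (W : Submodule k V), A = (fun w => v + w) '' (W : Set V)

/-- Representation theorem: a nonempty, affine, current-conserving,
potential-translation-invariant one-port relation is determined by an affine
relation `Z` between the current and the voltage difference. -/
theorem representation_theorem {k : Type*} [Field k]
    (A : Set ((k × k) × (k × k))) (hne : A.Nonempty)
    (hcons : ∀ p ∈ A, p.1.2 = p.2.2)
    (hshift : ∀ (φ₁ i₁ φ₂ i₂ v : k),
      ((φ₁, i₁), (φ₂, i₂)) ∈ A → ((φ₁ + v, i₁), (φ₂ + v, i₂)) ∈ A)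
    (haff : IsAffineSubspace k A) :
    ∃ Z : Set (k × k), IsAffineSubspace k Z ∧
      A = {p : (k × k) × (k × k) | p.1.2 = p.2.2 ∧ (p.1.2, p.2.1 - p.1.1) ∈ Z} := by
  classical
  let L : ((k × k) × (k × k)) →ₗ[k] k × k :=
    { toFun := fun p => (p.1.2, p.2.1 - p.1.1)
      map_add' := by
        intro a b
        simp [Prod.ext_iff]
        ring
      map_smul' := by
        intro c a
        simp [Prod.ext_iff, smul_sub]
        ring }
  refine ⟨L '' A, ?_, ?_⟩
  · rcases haff with h | ⟨v, W, hAW⟩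
    · exact absurd (h ▸ hne) (by simp)
    · refine Or.inr ⟨L v, W.map L, ?_⟩
      subst hAW
      ext z
      simp only [Set.mem_image, Submodule.map_coe, SetLike.mem_coe]
      constructor
      · rintro ⟨p, ⟨w, hw, rfl⟩, rfl⟩
        exact ⟨L w, ⟨w, hw, rfl⟩, by rw [map_add]⟩
      · rintro ⟨y, ⟨w, hw, rfl⟩, rfl⟩
        exact ⟨v + w, ⟨w, hw, rfl⟩, by rw [map_add]⟩
  · ext ⟨⟨φ₁, i₁⟩, ⟨φ₂, i₂⟩⟩
    constructor
    · intro h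
      exact ⟨hcons _ h, ⟨_, h, rfl⟩⟩
    · rintro ⟨hi, ⟨⟨⟨a, b⟩, ⟨c, d⟩⟩, hq, heq⟩⟩
      simp only [L, LinearMap.coe_mk, AddHom.coe_mk, Prod.mk.injEq] at heq
      obtain ⟨hb, hca⟩ := heq
      have hd : b = d := hcons _ hq
      have := hshift a b c d (φ₁ - a) hq
      have h1 : a + (φ₁ - a) = φ₁ := by ring
      have h2 : c + (φ₁ - a) = φ₂ := by linear_combination hca
      have hd' : d = i₂ := by rw [← hd, hb]; exact hi
      rw [h1, h2, hb, hd'] at this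
      exact this
end

section
/- Thévenin's theorem (affine form): let A ⊆ ℝ × ℝ be a nonempty affine subspace (relating current i to voltage difference v) such that its direction space c = {a − b | a, b ∈ A} satisfies: (i, v) ∈ c implies i·v ≥ 0. Then exactly one of the following holds: (a) A = {(i, V₀ + R·i) | i ∈ ℝ} for some V₀ ∈ ℝ and R ≥ 0; (b) A = {(I₀, v) | v ∈ ℝ} for some I₀ ∈ ℝ; (c) A is a single point {(I₀, V₀)}. -/
/-- Thévenin's theorem (affine form). -/
theorem thevenin (A : Set (ℝ × ℝ)) (hne : A.Nonempty)
    (haff : IsAffineSubspace ℝ A)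
    (hpsd : ∀ a ∈ A, ∀ b ∈ A, 0 ≤ (a.1 - b.1) * (a.2 - b.2)) :
    (∃ (V₀ R : ℝ), 0 ≤ R ∧ A = {p : ℝ × ℝ | p.2 = V₀ + R * p.1}) ∨
    (∃ I₀ : ℝ, A = {p : ℝ × ℝ | p.1 = I₀}) ∨
    (∃ I₀ V₀ : ℝ, A = {(I₀, V₀)}) := by
  obtain h | ⟨v, W, rfl⟩ := haff
  · exact absurd h (Set.nonempty_iff_ne_empty.mp hne)
  have hmem : ∀ w ∈ W, v + w ∈ (fun w => v + w) '' (W : Set (ℝ × ℝ)) :=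
    fun w hw => ⟨w, hw, rfl⟩
  have hW : ∀ w ∈ W, 0 ≤ w.1 * w.2 := by
    intro w hw
    have := hpsd (v + w) (hmem w hw) (v + 0) (hmem 0 W.zero_mem)
    simpa using this
  by_cases hI : ∃ w₀ ∈ W, w₀.1 ≠ 0
  · -- resistor line case
    obtain ⟨w₀, hw₀, hw₀1⟩ := hI
    left
    set R : ℝ := w₀.2 / w₀.1 with hR
    have hRnn : 0 ≤ R := by
      have : R = (w₀.1 * w₀.2) / (w₀.1 ^ 2) := by field_simp [hR]; rw [hR, div_mul_cancel₀ _ hw₀1]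
      rw [this]
      exact div_nonneg (hW w₀ hw₀) (sq_nonneg _)
    have hkey : ∀ w ∈ W, w.2 = R * w.1 := by
      intro w hw
      by_contra hne'
      set s : ℝ := w.2 - R * w.1 with hs
      have hs0 : s ≠ 0 := fun h => hne' (by linarith [sub_eq_zero.mp h])
      set u : ℝ × ℝ := w - (w.1 / w₀.1) • w₀ with hu
      have huW : u ∈ W := W.sub_mem hw (W.smul_mem _ hw₀)
      have hu1 : u.1 = 0 := by
        simp [hu]
        field_simp
        ring
      have hu2 : u.2 = s := by
        simp [hu, hs, hR]
        field_simp
      set t : ℝ := (-w₀.1 - w₀.2) / s with ht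
      have hzW : w₀ + t • u ∈ W := W.add_mem hw₀ (W.smul_mem _ huW)
      have := hW _ hzW
      have h1 : (w₀ + t • u).1 = w₀.1 := by simp [hu1]
      have h2 : (w₀ + t • u).2 = -w₀.1 := by
        simp [hu2, ht]
        field_simp
        ring
      rw [h1, h2] at this
      nlinarith [mul_self_pos.mpr hw₀1]
    refine ⟨v.2 - R * v.1, R, hRnn, ?_⟩
    ext p
    constructor
    · rintro ⟨w, hw, rfl⟩
      have := hkey w hw
      simp only [Set.mem_setOf_eq, Prod.fst_add, Prod.snd_add]
      linarith
    · intro hp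
      refine ⟨((p.1 - v.1) / w₀.1) • w₀, W.smul_mem _ hw₀, ?_⟩
      simp only [Set.mem_setOf_eq] at hp
      have h1 : ((p.1 - v.1) / w₀.1) * w₀.1 = p.1 - v.1 := by field_simp
      have h2 : ((p.1 - v.1) / w₀.1) * w₀.2 = R * (p.1 - v.1) := by
        rw [hR]; field_simp
      ext
      · simpa [h1] using by linarith [h1]
      · simp only [Prod.snd_add, Prod.smul_snd, smul_eq_mul, h2]
        linarith
  · -- all first components zero
    push_neg at hI
    by_cases hV : ∃ w₀ ∈ W, w₀.2 ≠ 0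
    · -- vertical line
      obtain ⟨w₀, hw₀, hw₀2⟩ := hV
      right; left
      refine ⟨v.1, ?_⟩
      ext p
      constructor
      · rintro ⟨w, hw, rfl⟩
        simp [hI w hw]
      · intro hp
        simp only [Set.mem_setOf_eq] at hp
        refine ⟨((p.2 - v.2) / w₀.2) • w₀, W.smul_mem _ hw₀, ?_⟩
        have h0 : w₀.1 = 0 := hI w₀ hw₀
        have h2 : ((p.2 - v.2) / w₀.2) * w₀.2 = p.2 - v.2 := by field_simp
        ext
        · simp [h0, hp]
        · simp only [Prod.snd_add, Prod.smul_snd, smul_eq_mul, h2]; ring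
    · -- single point
      push_neg at hV
      right; right
      refine ⟨v.1, v.2, ?_⟩
      ext p
      constructor
      · rintro ⟨w, hw, rfl⟩
        have := hI w hw
        have := hV w hw
        simp [Prod.ext_iff, *]
      · rintro rfl
        exact ⟨0, W.zero_mem, by simp⟩
end
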